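/- arXiv:1606.02197 — 2 statements merged into one kernel-verified Lean document; each statement's English description precedes it below -/
import Mathlib

section
/- Let μ be the uniform probability measure on the unit sphere S² ⊂ ℝ³ and let w ∈ ℝ³ with 0 < |w| < 1. Set R := |w|². Then ∫_{S²} Ibin(n·w) dμ(n) = ((1+R)·artanh(√R) − √R·(1 − ln(1−R))) / (√R · ln 4), where artanh is the inverse hyperbolic tangent. -/
open MeasureTheory Matrix

/-- Euclidean norm of a vector in ℝ³. -/
noncomputable def enorm3 (v : Fin 3 → ℝ) : ℝ := Real.sqrt (v 0 ^ 2 + v 1 ^ 2 + v 2 ^ 2)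

/-- Euclidean inner product on ℝ³. -/
def dot3 (v w : Fin 3 → ℝ) : ℝ := v 0 * w 0 + v 1 * w 1 + v 2 * w 2

/-- `μ` is the uniform (rotation-invariant) probability measure on the unit sphere
`S² = {v ∈ ℝ³ : |v| = 1}`: it is a probability measure, it gives full measure to the
sphere, and it is invariant under every orthogonal transformation of ℝ³. -/
def IsUniformSphereMeasure (μ : Measure (Fin 3 → ℝ)) : Prop :=
  IsProbabilityMeasure μ ∧
  μ {v | v 0 ^ 2 + v 1 ^ 2 + v 2 ^ 2 ≠ 1} = 0 ∧
  ∀ O : Matrix (Fin 3) (Fin 3) ℝ, O * Oᵀ = 1 → μ.map (Matrix.mulVec O) = μ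


/-- The binary mutual information `Ibin(x) = ((1+x)·log₂(1+x) + (1−x)·log₂(1−x))/2`. -/
noncomputable def Ibin (x : ℝ) : ℝ :=
  ((1 + x) * Real.logb 2 (1 + x) + (1 - x) * Real.logb 2 (1 - x)) / 2

/-- The inverse hyperbolic tangent. -/
noncomputable def artanh (x : ℝ) : ℝ := Real.log ((1 + x) / (1 - x)) / 2


open Finset

variable {μ : Measure (Fin 3 → ℝ)}

lemma ae_sphere (hμ : IsUniformSphereMeasure μ) :
    ∀ᵐ n ∂μ, n 0 ^ 2 + n 1 ^ 2 + n 2 ^ 2 = 1 := by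
  rw [ae_iff]; exact hμ.2.1

lemma ae_abs_le (hμ : IsUniformSphereMeasure μ) (i : Fin 3) :
    ∀ᵐ n ∂μ, |n i| ≤ 1 := by
  filter_upwards [ae_sphere hμ] with n hn
  have h2 : n i ^ 2 ≤ 1 := by
    fin_cases i
    · show n 0 ^ 2 ≤ 1; nlinarith [sq_nonneg (n 1), sq_nonneg (n 2)]
    · show n 1 ^ 2 ≤ 1; nlinarith [sq_nonneg (n 0), sq_nonneg (n 2)]
    · show n 2 ^ 2 ≤ 1; nlinarith [sq_nonneg (n 0), sq_nonneg (n 1)]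
  nlinarith [abs_nonneg (n i), sq_abs (n i)]

lemma integrable_bdd (hμ : IsUniformSphereMeasure μ) {f : (Fin 3 → ℝ) → ℝ} (C : ℝ)
    (hm : AEStronglyMeasurable f μ) (hb : ∀ᵐ n ∂μ, ‖f n‖ ≤ C) : Integrable f μ := by
  haveI := hμ.1
  exact (integrable_const C).mono' hm hb

lemma measurable_mulVec (O : Matrix (Fin 3) (Fin 3) ℝ) : Measurable (O.mulVec) := by
  have h := (O.mulVecLin.continuous_of_finiteDimensional).measurable
  exact h

lemma integral_comp_orth (hμ : IsUniformSphereMeasure μ) {O : Matrix (Fin 3) (Fin 3) ℝ}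
    (hO : O * Oᵀ = 1) {f : (Fin 3 → ℝ) → ℝ} (hf : AEStronglyMeasurable f μ) :
    ∫ n, f (O.mulVec n) ∂μ = ∫ n, f n ∂μ := by
  have h := hμ.2.2 O hO
  calc ∫ n, f (O.mulVec n) ∂μ = ∫ n, f n ∂(μ.map O.mulVec) :=
        (integral_map (measurable_mulVec O).aemeasurable (by rw [h]; exact hf)).symm
    _ = ∫ n, f n ∂μ := by rw [h]


lemma meas3 (i j l : ℕ) : Measurable fun n : Fin 3 → ℝ => n 0 ^ i * n 1 ^ j * n 2 ^ l := by
  exact (((measurable_pi_apply 0).pow_const i).mul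
    ((measurable_pi_apply 1).pow_const j)).mul ((measurable_pi_apply 2).pow_const l)

lemma integ3 (hμ : IsUniformSphereMeasure μ) (i j l : ℕ) :
    Integrable (fun n : Fin 3 → ℝ => n 0 ^ i * n 1 ^ j * n 2 ^ l) μ := by
  refine integrable_bdd hμ 1 (meas3 i j l).aestronglyMeasurable ?_
  filter_upwards [ae_abs_le hμ 0, ae_abs_le hμ 1, ae_abs_le hμ 2] with n h0 h1 h2
  have e : ‖n 0 ^ i * n 1 ^ j * n 2 ^ l‖ = |n 0| ^ i * |n 1| ^ j * |n 2| ^ l := by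
    rw [Real.norm_eq_abs, abs_mul, abs_mul, abs_pow, abs_pow, abs_pow]
  rw [e]
  have p0 := pow_le_one₀ (abs_nonneg (n 0)) h0 (n := i)
  have p1 := pow_le_one₀ (abs_nonneg (n 1)) h1 (n := j)
  have p2 := pow_le_one₀ (abs_nonneg (n 2)) h2 (n := l)
  have q0 := pow_nonneg (abs_nonneg (n 0)) i
  have q1 := pow_nonneg (abs_nonneg (n 1)) j
  have q2 := pow_nonneg (abs_nonneg (n 2)) l
  calc |n 0| ^ i * |n 1| ^ j * |n 2| ^ l ≤ 1 * 1 * 1 := by gcongr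
    _ = 1 := by ring

noncomputable def mom (μ : Measure (Fin 3 → ℝ)) (k : ℕ) : ℝ := ∫ n, (n 0) ^ (2*k) ∂μ
noncomputable def MM (μ : Measure (Fin 3 → ℝ)) (i j : ℕ) : ℝ := ∫ n, n 0 ^ i * n 1 ^ j ∂μ

lemma integ2 (hμ : IsUniformSphereMeasure μ) (i j : ℕ) :
    Integrable (fun n : Fin 3 → ℝ => n 0 ^ i * n 1 ^ j) μ := by
  simpa using integ3 hμ i j 0

def rotM (a b : ℝ) : Matrix (Fin 3) (Fin 3) ℝ := !![a,b,0;-b,a,0;0,0,1]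

lemma rotM_orth (a b : ℝ) (hab : a^2 + b^2 = 1) : rotM a b * (rotM a b)ᵀ = 1 := by
  have ht : (rotM a b)ᵀ = !![a,-b,0;b,a,0;0,0,1] := by
    ext i j
    fin_cases i <;> fin_cases j <;> simp [rotM]
  rw [ht]
  unfold rotM
  rw [Matrix.mul_fin_three, one_fin_three]
  ext i j
  fin_cases i <;> fin_cases j <;> simp [Matrix.vecHead, Matrix.vecTail] <;> nlinarith [hab]

lemma rotM_mulVec (a b : ℝ) (n : Fin 3 → ℝ) :
    (rotM a b).mulVec n = ![a * n 0 + b * n 1, -b * n 0 + a * n 1, n 2] := by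
  funext i
  fin_cases i <;>
    simp [rotM, Matrix.mulVec, dotProduct, Fin.sum_univ_three]

lemma rot_moment (hμ : IsUniformSphereMeasure μ) (k : ℕ) (a b : ℝ) (hab : a^2 + b^2 = 1) :
    ∫ n, (a * n 0 + b * n 1) ^ (2*k) ∂μ = mom μ k := by
  have h := integral_comp_orth hμ (rotM_orth a b hab)
    (f := fun n => (n 0) ^ (2*k)) ((measurable_pi_apply 0).pow_const _).aestronglyMeasurable
  beta_reduce at h
  unfold mom
  rw [← h]
  apply integral_congr_ae
  filter_upwards with n
  rw [rotM_mulVec]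
  norm_num

lemma scaled_moment (hμ : IsUniformSphereMeasure μ) (k : ℕ) (a : ℝ) :
    ∫ n, (a * n 0 + n 1) ^ (2*k) ∂μ = mom μ k * (a^2 + 1)^k := by
  have hs2 : (0:ℝ) < a^2 + 1 := by positivity
  set s := Real.sqrt (a^2+1) with hs
  have hspos : 0 < s := Real.sqrt_pos.mpr hs2
  have hsq : s^2 = a^2 + 1 := Real.sq_sqrt hs2.le
  have key : ∀ n : Fin 3 → ℝ,
      (a * n 0 + n 1) ^ (2*k) = (a^2+1)^k * ((a/s) * n 0 + (1/s) * n 1) ^ (2*k) := by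
    intro n
    have h1 : a * n 0 + n 1 = s * ((a/s) * n 0 + (1/s) * n 1) := by
      field_simp
    rw [h1, mul_pow, pow_mul, hsq]
  simp only [key]
  rw [integral_const_mul, rot_moment hμ k (a/s) (1/s) (by field_simp; linarith [hsq])]
  ring

lemma expand_moment (hμ : IsUniformSphereMeasure μ) (k : ℕ) (a : ℝ) :
    ∫ n, (a * n 0 + n 1) ^ (2*k) ∂μ
      = ∑ j ∈ range (2*k+1), ((2*k).choose j : ℝ) * MM μ j (2*k-j) * a^j := by
  have pt : ∀ n : Fin 3 → ℝ, (a * n 0 + n 1) ^ (2*k)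
      = ∑ j ∈ range (2*k+1), ((2*k).choose j : ℝ) * a^j * (n 0 ^ j * n 1 ^ (2*k-j)) := by
    intro n
    rw [add_pow]
    refine Finset.sum_congr rfl fun j hj => ?_
    ring
  simp only [pt]
  rw [integral_finset_sum _ (fun j _ => ((integ2 hμ j (2*k-j)).const_mul _))]
  refine Finset.sum_congr rfl fun j hj => ?_
  rw [integral_const_mul]
  unfold MM
  ring

lemma poly_id (hμ : IsUniformSphereMeasure μ) (k : ℕ) :
    (∑ j ∈ range (2*k+1),
        Polynomial.C (((2*k).choose j : ℝ) * MM μ j (2*k-j)) * Polynomial.X ^ j)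
      = Polynomial.C (mom μ k) * (Polynomial.X^2 + 1)^k := by
  apply Polynomial.funext
  intro a
  have h1 := expand_moment hμ k a
  have h2 := scaled_moment hμ k a
  simp only [Polynomial.eval_finset_sum, Polynomial.eval_mul, Polynomial.eval_C,
    Polynomial.eval_pow, Polynomial.eval_X, Polynomial.eval_add, Polynomial.eval_one]
  rw [← h1, h2]

lemma coeff_two (hμ : IsUniformSphereMeasure μ) (k : ℕ) (hk : 1 ≤ k) :
    ((2*k).choose 2 : ℝ) * MM μ 2 (2*k-2) = mom μ k * k := by
  have h := poly_id hμ k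
  have hc := congrArg (fun p => Polynomial.coeff p 2) h
  rw [Polynomial.finset_sum_coeff] at hc
  rw [Finset.sum_eq_single 2 (fun j _ hj => by
      rw [Polynomial.coeff_C_mul, Polynomial.coeff_X_pow, if_neg (fun h => hj h.symm)]
      ring) (fun h => absurd (Finset.mem_range.mpr (by omega)) h)] at hc
  rw [Polynomial.coeff_C_mul, Polynomial.coeff_X_pow, if_pos rfl] at hc
  have hterm : ∀ i : ℕ, (((Polynomial.X : Polynomial ℝ)^2)^i * 1^(k-i)
      * ((k.choose i : ℕ) : Polynomial ℝ)).coeff 2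
      = if 2*i = 2 then ((k.choose i : ℕ) : ℝ) else 0 := by
    intro i
    rw [one_pow, mul_one, ← pow_mul, ← Polynomial.C_eq_natCast, Polynomial.coeff_mul_C,
      Polynomial.coeff_X_pow]
    by_cases h2 : 2*i = 2
    · rw [if_pos (by omega : 2 = 2*i), if_pos h2, one_mul]
    · rw [if_neg (by omega : ¬ 2 = 2*i), if_neg h2, zero_mul]
  have hrhs : ((Polynomial.X^2 + 1 : Polynomial ℝ)^k).coeff 2 = (k : ℝ) := by
    rw [add_pow, Polynomial.finset_sum_coeff]
    simp only [hterm]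
    rw [Finset.sum_eq_single 1 (fun i _ hi => if_neg (by omega))
      (fun h => absurd (Finset.mem_range.mpr (by omega)) h)]
    rw [if_pos rfl, Nat.choose_one_right]
  rw [Polynomial.coeff_C_mul, hrhs] at hc
  linarith [hc]


def sw01 : Matrix (Fin 3) (Fin 3) ℝ := !![0,1,0;1,0,0;0,0,1]
def sw12 : Matrix (Fin 3) (Fin 3) ℝ := !![1,0,0;0,0,1;0,1,0]

lemma sw01_orth : sw01 * sw01ᵀ = 1 := by
  have ht : sw01ᵀ = sw01 := by
    ext i j; fin_cases i <;> fin_cases j <;> simp [sw01, Matrix.vecHead, Matrix.vecTail]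
  rw [ht]
  unfold sw01
  rw [Matrix.mul_fin_three, one_fin_three]
  ext i j
  fin_cases i <;> fin_cases j <;> simp [Matrix.vecHead, Matrix.vecTail]

lemma sw12_orth : sw12 * sw12ᵀ = 1 := by
  have ht : sw12ᵀ = sw12 := by
    ext i j; fin_cases i <;> fin_cases j <;> simp [sw12, Matrix.vecHead, Matrix.vecTail]
  rw [ht]
  unfold sw12
  rw [Matrix.mul_fin_three, one_fin_three]
  ext i j
  fin_cases i <;> fin_cases j <;> simp [Matrix.vecHead, Matrix.vecTail]

lemma sw01_mulVec (n : Fin 3 → ℝ) : sw01.mulVec n = ![n 1, n 0, n 2] := by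
  funext i
  fin_cases i <;> simp [sw01, Matrix.mulVec, dotProduct, Fin.sum_univ_three]

lemma sw12_mulVec (n : Fin 3 → ℝ) : sw12.mulVec n = ![n 0, n 2, n 1] := by
  funext i
  fin_cases i <;> simp [sw12, Matrix.mulVec, dotProduct, Fin.sum_univ_three]

lemma MM_symm (hμ : IsUniformSphereMeasure μ) (i j : ℕ) : MM μ i j = MM μ j i := by
  have h := integral_comp_orth hμ sw01_orth (f := fun n => n 0 ^ j * n 1 ^ i)
    (((measurable_pi_apply 0).pow_const j).mul
      ((measurable_pi_apply 1).pow_const i)).aestronglyMeasurable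
  unfold MM
  rw [← h]
  apply integral_congr_ae
  filter_upwards with n
  rw [sw01_mulVec]
  norm_num
  ring

lemma swap12_int (hμ : IsUniformSphereMeasure μ) (i : ℕ) :
    ∫ n, n 0 ^ i * n 2 ^ 2 ∂μ = ∫ n, n 0 ^ i * n 1 ^ 2 ∂μ := by
  have h := integral_comp_orth hμ sw12_orth (f := fun n => n 0 ^ i * n 1 ^ 2)
    (((measurable_pi_apply 0).pow_const i).mul
      ((measurable_pi_apply 1).pow_const 2)).aestronglyMeasurable
  rw [← h]
  apply integral_congr_ae
  filter_upwards with n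
  rw [sw12_mulVec]
  norm_num

lemma mom_rec (hμ : IsUniformSphereMeasure μ) (k : ℕ) :
    mom μ k * (2*k+1 : ℝ) = mom μ (k+1) * (2*k+3) := by
  haveI := hμ.1
  -- value of MM μ 2 (2k)
  have hc := coeff_two hμ (k+1) (by omega)
  have hch : ((2*(k+1)).choose 2 : ℕ) = (k+1)*(2*k+1) := by
    rw [Nat.choose_two_right]
    apply Nat.div_eq_of_eq_mul_left (by norm_num)
    have hsub : 2*(k+1)-1 = 2*k+1 := by omega
    rw [hsub]
    ring
  rw [hch] at hc
  have h2k : 2*(k+1)-2 = 2*k := by omega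
  rw [h2k] at hc
  push_cast at hc
  -- hc : (k+1)*(2k+1) * MM μ 2 (2k) = mom μ (k+1) * (k+1)
  have hMM : MM μ 2 (2*k) * (2*k+1 : ℝ) = mom μ (k+1) := by
    have hk1 : ((k:ℝ)+1) ≠ 0 := by positivity
    have h' : (MM μ 2 (2*k) * (2*(k:ℝ)+1)) * ((k:ℝ)+1) = mom μ (k+1) * ((k:ℝ)+1) := by
      linear_combination hc
    exact mul_right_cancel₀ hk1 h'
  -- split the sphere integral
  have hsplit : mom μ k = mom μ (k+1) + (∫ n, n 0 ^ (2*k) * n 1 ^ 2 ∂μ)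
      + (∫ n, n 0 ^ (2*k) * n 2 ^ 2 ∂μ) := by
    have e1 : mom μ k = ∫ n, n 0 ^ (2*k) * (n 0 ^ 2 + n 1 ^ 2 + n 2 ^ 2) ∂μ := by
      unfold mom
      apply integral_congr_ae
      filter_upwards [ae_sphere hμ] with n hn
      rw [hn, mul_one]
    have e2 : ∀ n : Fin 3 → ℝ, n 0 ^ (2*k) * (n 0 ^ 2 + n 1 ^ 2 + n 2 ^ 2)
        = n 0 ^ (2*(k+1)) + n 0 ^ (2*k) * n 1 ^ 2 + n 0 ^ (2*k) * n 2 ^ 2 := by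
      intro n; ring
    rw [e1]
    simp only [e2]
    have i1 : Integrable (fun n : Fin 3 → ℝ => n 0 ^ (2*(k+1))) μ := by
      simpa using integ3 hμ (2*(k+1)) 0 0
    have i2 : Integrable (fun n : Fin 3 → ℝ => n 0 ^ (2*k) * n 1 ^ 2) μ := by
      simpa using integ3 hμ (2*k) 2 0
    have i3 : Integrable (fun n : Fin 3 → ℝ => n 0 ^ (2*k) * n 2 ^ 2) μ := by
      simpa using integ3 hμ (2*k) 0 2
    have i12 : Integrable (fun n : Fin 3 → ℝ =>
        n 0 ^ (2*(k+1)) + n 0 ^ (2*k) * n 1 ^ 2) μ := i1.add i2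
    rw [integral_add i12 i3, integral_add i1 i2]
    rfl
  have hs1 : (∫ n, n 0 ^ (2*k) * n 1 ^ 2 ∂μ) = MM μ 2 (2*k) := by
    have := MM_symm hμ (2*k) 2
    unfold MM at this ⊢
    exact this
  have hs2 : (∫ n, n 0 ^ (2*k) * n 2 ^ 2 ∂μ) = MM μ 2 (2*k) := by
    rw [swap12_int hμ]
    exact hs1
  rw [hs1, hs2] at hsplit
  have h21 : (2*(k:ℝ)+1) ≠ 0 := by positivity
  rw [hsplit]
  field_simp at hMM ⊢
  nlinarith [hMM]

lemma mom_eq (hμ : IsUniformSphereMeasure μ) (k : ℕ) : mom μ k = 1/(2*k+1 : ℝ) := by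
  induction k with
  | zero =>
    haveI := hμ.1
    simp [mom]
  | succ k ih =>
    have h := mom_rec hμ k
    rw [ih] at h
    have h21 : (2*(k:ℝ)+1) ≠ 0 := by positivity
    have h23 : (2*(k:ℝ)+3) ≠ 0 := by positivity
    push_cast
    field_simp at h ⊢
    linarith [h]


lemma hasSum_B1 {y : ℝ} (hy : |y| < 1) :
    HasSum (fun k : ℕ => y ^ (2*k+2) / (2*k+1 : ℝ))
      (y * (Real.log (1+y) - Real.log (1-y)) / 2) := by
  have h := (Real.hasSum_log_sub_log_of_abs_lt_one hy).mul_left (y/2)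
  convert h using 1
  · rfl
  · funext k
    have hk : (2*(k:ℝ)+1) ≠ 0 := by positivity
    field_simp
    ring
  · ring

lemma hasSum_B2 {y : ℝ} (hy : |y| < 1) :
    HasSum (fun k : ℕ => y ^ (2*k+2) / (2*k+2 : ℝ)) (-Real.log (1-y^2) / 2) := by
  have hy2 : |y^2| < 1 := by
    rw [abs_pow]
    exact pow_lt_one₀ (abs_nonneg y) hy (by norm_num)
  have h := (Real.hasSum_pow_div_log_of_abs_lt_one hy2).mul_left (1/2)
  convert h using 1
  · rfl
  · funext k
    have hk : ((k:ℝ)+1) ≠ 0 := by positivity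
    have hpow : (y^2)^(k+1) = y^(2*k+2) := by rw [← pow_mul]; ring_nf
    rw [hpow, one_div, inv_mul_eq_div, div_div]
    congr 1
    ring
  · ring

lemma hasSum_A {y : ℝ} (hy : |y| < 1) :
    HasSum (fun k : ℕ => y ^ (2*k+1) / (2*k+1 : ℝ))
      ((Real.log (1+y) - Real.log (1-y)) / 2) := by
  have h := (Real.hasSum_log_sub_log_of_abs_lt_one hy).mul_left (1/2)
  convert h using 1
  · rfl
  · funext k
    have hk : (2*(k:ℝ)+1) ≠ 0 := by positivity
    field_simp
  · ring

lemma hasSum_B3 {r : ℝ} (hr0 : 0 < r) (hr1 : r < 1) :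
    HasSum (fun k : ℕ => r ^ (2*k+2) / (2*k+3 : ℝ))
      (((Real.log (1+r) - Real.log (1-r)) / 2 - r) / r) := by
  have hr : |r| < 1 := by rw [abs_of_pos hr0]; exact hr1
  set A := (Real.log (1+r) - Real.log (1-r)) / 2 with hA
  have hA0 : (A - r) + ∑ i ∈ Finset.range 1, r ^ (2*i+1) / (2*i+1 : ℝ) = A := by
    simp
  have hshift := (hasSum_nat_add_iff (f := fun k : ℕ => r ^ (2*k+1) / (2*k+1 : ℝ)) 1).mpr
    (by rw [hA0]; exact hasSum_A hr)
  have h := hshift.mul_left (1/r)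
  convert h using 1
  · rfl
  · funext k
    have hk : (2*(k:ℝ)+3) ≠ 0 := by positivity
    have hrne : r ≠ 0 := hr0.ne'
    push_cast
    have he : 2*(k+1)+1 = 2*k+3 := by omega
    rw [he]
    field_simp
    ring
  · field_simp

lemma hasSum_Ibin {y : ℝ} (hy : |y| < 1) :
    HasSum (fun k : ℕ => y^(2*k+2) / ((2*k+1) * (2*k+2) * Real.log 2)) (Ibin y) := by
  obtain ⟨hl, hr⟩ := abs_lt.mp hy
  have h1p : (0:ℝ) < 1 + y := by linarith
  have h1m : (0:ℝ) < 1 - y := by linarith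
  have hlog2 : Real.log 2 ≠ 0 := (Real.log_pos one_lt_two).ne'
  have h := ((hasSum_B1 hy).sub (hasSum_B2 hy)).mul_left (1 / Real.log 2)
  convert h using 1
  · rfl
  · funext k
    have hk1 : (2*(k:ℝ)+1) ≠ 0 := by positivity
    have hk2 : (2*(k:ℝ)+2) ≠ 0 := by positivity
    field_simp
    ring
  · unfold Ibin
    rw [Real.logb, Real.logb]
    have hsq : 1 - y^2 = (1+y)*(1-y) := by ring
    rw [hsq, Real.log_mul h1p.ne' h1m.ne']
    field_simp
    ring

lemma hasSum_main {r : ℝ} (hr0 : 0 < r) (hr1 : r < 1) :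
    HasSum (fun k : ℕ =>
        r^(2*k+2) / ((2*k+1) * (2*k+2) * Real.log 2) * (1/(2*((k:ℝ)+1)+1)))
      (((1 + r^2) * artanh r - r * (1 - Real.log (1 - r^2))) / (r * Real.log 4)) := by
  have hr : |r| < 1 := by rw [abs_of_pos hr0]; exact hr1
  have h1p : (0:ℝ) < 1 + r := by linarith
  have h1m : (0:ℝ) < 1 - r := by linarith
  have hlog2 : Real.log 2 ≠ 0 := (Real.log_pos one_lt_two).ne'
  have hrne : r ≠ 0 := hr0.ne'
  have h := ((((hasSum_B1 hr).mul_left (1/2)).sub (hasSum_B2 hr)).add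
    ((hasSum_B3 hr0 hr1).mul_left (1/2))).mul_left (1/Real.log 2)
  convert h using 1
  · rfl
  · funext k
    have hk1 : (2*(k:ℝ)+1) ≠ 0 := by positivity
    have hk2 : (2*(k:ℝ)+2) ≠ 0 := by positivity
    have hk3 : (2*(k:ℝ)+3) ≠ 0 := by positivity
    field_simp
    ring
  · have hlog4 : Real.log 4 = 2 * Real.log 2 := by
      rw [show (4:ℝ) = 2^2 by norm_num, Real.log_pow]
      push_cast
      ring
    unfold artanh
    rw [Real.log_div h1p.ne' h1m.ne']
    have hsq : 1 - r^2 = (1+r)*(1-r) := by ring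
    rw [hsq, Real.log_mul h1p.ne' h1m.ne', hlog4]
    field_simp
    ring


lemma exists_orth (w : Fin 3 → ℝ) (hr0 : 0 < enorm3 w) :
    ∃ O : Matrix (Fin 3) (Fin 3) ℝ, O * Oᵀ = 1 ∧
      ∀ n : Fin 3 → ℝ, dot3 (O.mulVec n) w = enorm3 w * n 0 := by
  classical
  set r := enorm3 w with hrdef
  have hrne : r ≠ 0 := hr0.ne'
  have hsq : w 0 ^ 2 + w 1 ^ 2 + w 2 ^ 2 = r ^ 2 := by
    rw [hrdef]
    unfold enorm3
    rw [Real.sq_sqrt (by positivity)]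
  -- the unit vector u = w / r in Euclidean space
  set u : EuclideanSpace ℝ (Fin 3) := WithLp.toLp 2 (fun i => w i / r) with hu
  have hnu : ‖u‖ = 1 := by
    rw [EuclideanSpace.norm_eq]
    rw [Fin.sum_univ_three]
    have : ‖u 0‖ ^ 2 + ‖u 1‖ ^ 2 + ‖u 2‖ ^ 2 = 1 := by
      simp only [Real.norm_eq_abs, sq_abs, hu]
      field_simp
      linarith [hsq]
    rw [this, Real.sqrt_one]
  set e0 : EuclideanSpace ℝ (Fin 3) := EuclideanSpace.single 0 1 with he0
  have hne0 : ‖e0‖ = ‖u‖ := by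
    rw [hnu, he0, EuclideanSpace.norm_single, norm_one]
  set T := Submodule.reflection (ℝ ∙ (e0 - u))ᗮ with hT
  have hTe0 : T e0 = u := Submodule.reflection_sub hne0
  set f : (Fin 3 → ℝ) → (Fin 3 → ℝ) := fun v => (T (WithLp.toLp 2 v)).ofLp with hf
  set O : Matrix (Fin 3) (Fin 3) ℝ := Matrix.of (fun i j => f (Pi.single j 1) i) with hO
  have hcol : ∀ i : Fin 3, O i 0 = w i / r := by
    intro i
    have hsing : WithLp.toLp 2 (Pi.single 0 1 : Fin 3 → ℝ) = e0 := by
      ext j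
      rw [he0]
      simp [EuclideanSpace.single_apply, Pi.single_apply, eq_comm]
    show f (Pi.single 0 1) i = w i / r
    rw [hf]
    simp only
    rw [show T (WithLp.toLp 2 (Pi.single 0 1 : Fin 3 → ℝ)) = u from hsing ▸ hTe0, hu]
  have hinner : ∀ x y : EuclideanSpace ℝ (Fin 3),
      (T x) 0 * (T y) 0 + (T x) 1 * (T y) 1 + (T x) 2 * (T y) 2
        = x 0 * y 0 + x 1 * y 1 + x 2 * y 2 := by
    intro x y
    have h := T.inner_map_map x y
    rw [PiLp.inner_apply, PiLp.inner_apply] at h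
    simp [Fin.sum_univ_three, RCLike.inner_apply, conj_trivial] at h
    linear_combination h
  have hOT : Oᵀ * O = 1 := by
    ext i j
    rw [Matrix.mul_apply]
    simp only [Matrix.transpose_apply, Fin.sum_univ_three, hO, Matrix.of_apply,
      Matrix.one_apply]
    show (T (WithLp.toLp 2 (Pi.single i 1))) 0 * (T (WithLp.toLp 2 (Pi.single j 1))) 0
      + (T (WithLp.toLp 2 (Pi.single i 1))) 1 * (T (WithLp.toLp 2 (Pi.single j 1))) 1
      + (T (WithLp.toLp 2 (Pi.single i 1))) 2 * (T (WithLp.toLp 2 (Pi.single j 1))) 2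
      = if i = j then 1 else 0
    rw [hinner (WithLp.toLp 2 (Pi.single i 1)) (WithLp.toLp 2 (Pi.single j 1))]
    fin_cases i <;> fin_cases j <;> simp [Pi.single_apply]
  have hcolsum : ∀ j : Fin 3,
      O 0 j * w 0 + O 1 j * w 1 + O 2 j * w 2 = r * (if j = 0 then 1 else 0) := by
    intro j
    have h := congrFun (congrFun hOT j) 0
    rw [Matrix.mul_apply] at h
    simp only [Fin.sum_univ_three, Matrix.transpose_apply, Matrix.one_apply] at h
    rw [hcol 0, hcol 1, hcol 2] at h
    field_simp at h
    rw [h]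
  refine ⟨O, mul_eq_one_comm.mp hOT, fun n => ?_⟩
  have h0 := hcolsum 0
  have h1 := hcolsum 1
  have h2 := hcolsum 2
  rw [if_pos rfl] at h0
  rw [if_neg (by decide)] at h1
  rw [if_neg (by decide)] at h2
  unfold dot3
  simp only [Matrix.mulVec, dotProduct, Fin.sum_univ_three]
  linear_combination n 0 * h0 + n 1 * h1 + n 2 * h2


lemma measurable_Ibin : Measurable Ibin := by
  unfold Ibin Real.logb
  exact (((measurable_const.add measurable_id).mul
    ((Real.measurable_log.comp (measurable_const.add measurable_id)).div measurable_const)).add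
    ((measurable_const.sub measurable_id).mul
    ((Real.measurable_log.comp (measurable_const.sub measurable_id)).div
      measurable_const))).div measurable_const


/-- Average of `Ibin(n·w)` over the uniform measure on the sphere, for `0 < |w| < 1`
and `R = |w|²`:
`∫ Ibin(n·w) dμ(n) = ((1+R)·artanh√R − √R(1 − ln(1−R))) / (√R · ln 4)`. -/
theorem stmt2 (μ : Measure (Fin 3 → ℝ)) (hμ : IsUniformSphereMeasure μ)
    (w : Fin 3 → ℝ) (hw0 : 0 < enorm3 w) (hw1 : enorm3 w < 1)
    (R : ℝ) (hR : R = enorm3 w ^ 2) :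
    ∫ n, Ibin (dot3 n w) ∂μ =
      ((1 + R) * artanh (Real.sqrt R) - Real.sqrt R * (1 - Real.log (1 - R))) /
        (Real.sqrt R * Real.log 4) := by
  classical
  haveI := hμ.1
  set r := enorm3 w with hrdef
  obtain ⟨O, hOorth, hdot⟩ := exists_orth w hw0
  have hdotmeas : Measurable fun n : Fin 3 → ℝ => dot3 n w := by
    unfold dot3
    fun_prop
  have step1 : ∫ n, Ibin (dot3 n w) ∂μ = ∫ n, Ibin (r * n 0) ∂μ := by
    rw [← integral_comp_orth hμ hOorth (f := fun n => Ibin (dot3 n w))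
      ((measurable_Ibin.comp hdotmeas).aestronglyMeasurable)]
    apply integral_congr_ae
    filter_upwards with n
    rw [hdot n]
  have hlog2 : (0:ℝ) < Real.log 2 := Real.log_pos one_lt_two
  set c : ℕ → ℝ := fun k => r^(2*k+2) / ((2*k+1) * (2*k+2) * Real.log 2) with hc
  set F : ℕ → (Fin 3 → ℝ) → ℝ := fun k n => c k * (n 0)^(2*k+2) with hF
  have hcnn : ∀ k, 0 ≤ c k := fun k => by
    rw [hc]
    have : (0:ℝ) < r := hw0
    positivity
  have hr2 : r^2 < 1 := by nlinarith [hw0, hw1]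
  have hcsum : Summable c := by
    have hg : Summable (fun k : ℕ => (r^2)^k) :=
      summable_geometric_of_lt_one (by positivity) hr2
    refine Summable.of_nonneg_of_le hcnn (fun k => ?_) (hg.mul_left (r^2 / Real.log 2))
    have hpow : r^(2*k+2) = r^2 * (r^2)^k := by
      rw [← pow_mul, ← pow_add]
      congr 1
      omega
    have hk0 : (0:ℝ) ≤ (k:ℝ) := Nat.cast_nonneg k
    have hden : Real.log 2 ≤ (2*(k:ℝ)+1) * (2*(k:ℝ)+2) * Real.log 2 := by
      nlinarith [hlog2, hk0, mul_nonneg hk0 hlog2.le,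
        mul_nonneg (mul_nonneg hk0 hk0) hlog2.le]
    calc c k ≤ r^(2*k+2) / Real.log 2 := by
          rw [hc]
          exact div_le_div_of_nonneg_left (by positivity) hlog2 hden
      _ = r^2 / Real.log 2 * (r^2)^k := by rw [hpow]; ring
  have hFint : ∀ k, Integrable (F k) μ := by
    intro k
    have h := (integ3 hμ (2*k+2) 0 0).const_mul (c k)
    simpa [hF] using h
  have hFnorm : ∀ k, ∫ n, ‖F k n‖ ∂μ ≤ c k := by
    intro k
    have hb : ∀ᵐ n ∂μ, ‖F k n‖ ≤ c k := by
      filter_upwards [ae_abs_le hμ 0] with n hn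
      rw [hF]
      simp only
      calc ‖c k * n 0 ^ (2*k+2)‖ = c k * |n 0| ^ (2*k+2) := by
            rw [norm_mul, Real.norm_eq_abs, Real.norm_eq_abs, abs_of_nonneg (hcnn k), abs_pow]
        _ ≤ c k * 1 := by
            have := pow_le_one₀ (abs_nonneg (n 0)) hn (n := 2*k+2)
            exact mul_le_mul_of_nonneg_left this (hcnn k)
        _ = c k := mul_one _
    calc ∫ n, ‖F k n‖ ∂μ ≤ ∫ _n, c k ∂μ :=
          integral_mono_ae (hFint k).norm (integrable_const _) hb
      _ = c k := by simp
  have hsummable : Summable (fun k => ∫ n, ‖F k n‖ ∂μ) :=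
    Summable.of_nonneg_of_le (fun k => integral_nonneg fun n => norm_nonneg _) hFnorm hcsum
  have hkey := hasSum_integral_of_summable_integral_norm hFint hsummable
  have hFk : ∀ k, ∫ n, F k n ∂μ = c k * (1/(2*((k:ℝ)+1)+1)) := by
    intro k
    rw [hF]
    simp only
    rw [integral_const_mul]
    have h2 : 2*k+2 = 2*(k+1) := by omega
    rw [h2]
    have hm := mom_eq hμ (k+1)
    unfold mom at hm
    rw [hm]
    push_cast
    ring
  have hae : ∀ᵐ n ∂μ, Ibin (r * n 0) = ∑' k, F k n := by
    filter_upwards [ae_abs_le hμ 0] with n hn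
    have habs : |r * n 0| < 1 := by
      rw [abs_mul, abs_of_pos hw0]
      calc r * |n 0| ≤ r * 1 := by
            exact mul_le_mul_of_nonneg_left hn hw0.le
        _ < 1 := by simpa using hw1
    have hs := hasSum_Ibin habs
    have heq : (fun k : ℕ => (r * n 0)^(2*k+2) / ((2*k+1) * (2*k+2) * Real.log 2))
        = fun k => F k n := by
      funext k
      rw [hF, hc]
      simp only
      rw [mul_pow]
      ring
    rw [heq] at hs
    exact hs.tsum_eq.symm
  have step2 : ∫ n, Ibin (r * n 0) ∂μ = ∫ n, (∑' k, F k n) ∂μ := integral_congr_ae hae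
  have hmain := hasSum_main (r := r) hw0 hw1
  have hmain' : HasSum (fun k => ∫ n, F k n ∂μ)
      (((1 + r^2) * artanh r - r * (1 - Real.log (1 - r^2))) / (r * Real.log 4)) := by
    have e : (fun k => ∫ n, F k n ∂μ)
        = fun k : ℕ => r^(2*k+2) / ((2*k+1) * (2*k+2) * Real.log 2) * (1/(2*((k:ℝ)+1)+1)) := by
      funext k
      rw [hFk k, hc]
    rw [e]
    exact hmain
  have hval : ∫ n, (∑' k, F k n) ∂μ
      = ((1 + r^2) * artanh r - r * (1 - Real.log (1 - r^2))) / (r * Real.log 4) :=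
    hkey.unique hmain'
  rw [step1, step2, hval, hR, Real.sqrt_sq hw0.le]
end

section
/- For 0 < κ ≤ 1 and a unit vector ĉ = (c₁,c₂,c₃) ∈ ℝ³, define the average gain ⟨G⟩(κ,ĉ) := ∫_{S²} Ibin(κ·√(c₁²n₁² + c₂²n₂² + c₃²n₃²)) dμ(n). Then for every 0 < κ ≤ 1 and every unit vector ĉ, ⟨G⟩(κ, (1,1,1)/√3) ≤ ⟨G⟩(κ, ĉ) ≤ ⟨G⟩(κ, (0,0,1)); that is, at fixed κ ≤ 1 the minimum over directions is attained at the isotropic direction and the maximum at the direction with a single nonzero component. -/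
open MeasureTheory Matrix

/-- The average RSP gain `⟨G⟩(κ,ĉ)` for the MMMS with correlation matrix
`E = κ·diag(c₁,c₂,c₃)`, averaged over the sphere of target states. -/
noncomputable def avgG (μ : Measure (Fin 3 → ℝ)) (κ : ℝ) (c : Fin 3 → ℝ) : ℝ :=
  ∫ n, Ibin (κ * Real.sqrt (c 0 ^ 2 * n 0 ^ 2 + c 1 ^ 2 * n 1 ^ 2 + c 2 ^ 2 * n 2 ^ 2)) ∂μ

namespace Stmt15Aux

open Real Set

lemma Ibin_eq : Ibin = fun x : ℝ =>
    ((1 + x) * Real.log (1 + x) + (1 - x) * Real.log (1 - x)) / Real.log 2 / 2 := by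
  funext x
  simp only [Ibin, Real.logb]
  ring

lemma continuous_Ibin : Continuous Ibin := by
  rw [Ibin_eq]
  have h1 : Continuous fun x : ℝ => (1 + x) * Real.log (1 + x) :=
    Real.continuous_mul_log.comp (continuous_const.add continuous_id)
  have h2 : Continuous fun x : ℝ => (1 - x) * Real.log (1 - x) :=
    Real.continuous_mul_log.comp (continuous_const.sub continuous_id)
  exact ((h1.add h2).div_const _).div_const _

lemma hasDerivAt_Ibin {x : ℝ} (h1 : -1 < x) (h2 : x < 1) :
    HasDerivAt Ibin ((Real.log (1 + x) - Real.log (1 - x)) / (2 * Real.log 2)) x := by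
  have hx1 : (0:ℝ) < 1 + x := by linarith
  have hx2 : (0:ℝ) < 1 - x := by linarith
  have d1 : HasDerivAt (fun y : ℝ => 1 + y) 1 x := by
    simpa using (hasDerivAt_id x).const_add (1 : ℝ)
  have d2 : HasDerivAt (fun y : ℝ => 1 - y) (-1) x := by
    simpa using (hasDerivAt_id x).const_sub (1 : ℝ)
  have l1 : HasDerivAt (fun y : ℝ => Real.log (1 + y)) ((1 + x)⁻¹ * 1) x :=
    (Real.hasDerivAt_log hx1.ne').comp x d1
  have l2 : HasDerivAt (fun y : ℝ => Real.log (1 - y)) ((1 - x)⁻¹ * (-1)) x :=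
    (Real.hasDerivAt_log hx2.ne').comp x d2
  have p1 := d1.mul l1
  have p2 := d2.mul l2
  have hD := ((p1.add p2).div_const (Real.log 2)).div_const 2
  rw [Ibin_eq]
  refine hD.congr_deriv ?_
  have hl2 : Real.log 2 ≠ 0 := (Real.log_pos one_lt_two).ne'
  field_simp
  ring

/-- Derivative of `t ↦ Ibin (κ√t)`. -/
lemma hasDerivAt_F {κ t : ℝ} (ht : 0 < t) (hκ : 0 ≤ κ) (h1 : κ * Real.sqrt t < 1) :
    HasDerivAt (fun u => Ibin (κ * Real.sqrt u))
      ((Real.log (1 + κ * Real.sqrt t) - Real.log (1 - κ * Real.sqrt t)) / (2 * Real.log 2)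
        * (κ * (1 / (2 * Real.sqrt t)))) t := by
  have hs : HasDerivAt (fun u : ℝ => κ * Real.sqrt u) (κ * (1 / (2 * Real.sqrt t))) t :=
    (Real.hasDerivAt_sqrt ht.ne').const_mul κ
  have hge : -1 < κ * Real.sqrt t :=
    lt_of_lt_of_le (by norm_num) (mul_nonneg hκ (Real.sqrt_nonneg t))
  exact (hasDerivAt_Ibin hge h1).comp t hs

lemma log_ineq {s : ℝ} (h0 : 0 ≤ s) (h1 : s < 1) :
    Real.log (1 + s) - Real.log (1 - s) ≤ 2 * s / (1 - s ^ 2) := by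
  set ψ : ℝ → ℝ := fun s => 2 * s / (1 - s ^ 2) - (Real.log (1 + s) - Real.log (1 - s)) with hψ
  have key : ∀ x ∈ Ioo (0:ℝ) 1, HasDerivAt ψ
      ((2 * (1 - x ^ 2) - 2 * x * (-(2 * x))) / (1 - x ^ 2) ^ 2
        - ((1 + x)⁻¹ * 1 - (1 - x)⁻¹ * (-1))) x := by
    intro x hx
    have hx1 : (0:ℝ) < 1 + x := by have := hx.1; linarith
    have hx2 : (0:ℝ) < 1 - x := by have := hx.2; linarith
    have hden : (1:ℝ) - x ^ 2 ≠ 0 := by nlinarith [hx.1, hx.2]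
    have d1 : HasDerivAt (fun y : ℝ => 1 + y) 1 x := by
      simpa using (hasDerivAt_id x).const_add (1 : ℝ)
    have d2 : HasDerivAt (fun y : ℝ => 1 - y) (-1) x := by
      simpa using (hasDerivAt_id x).const_sub (1 : ℝ)
    have l1 : HasDerivAt (fun y : ℝ => Real.log (1 + y)) ((1 + x)⁻¹ * 1) x :=
      (Real.hasDerivAt_log hx1.ne').comp x d1
    have l2 : HasDerivAt (fun y : ℝ => Real.log (1 - y)) ((1 - x)⁻¹ * (-1)) x :=
      (Real.hasDerivAt_log hx2.ne').comp x d2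
    have hnum : HasDerivAt (fun y : ℝ => 2 * y) 2 x := by
      simpa using (hasDerivAt_id x).const_mul (2 : ℝ)
    have hd : HasDerivAt (fun y : ℝ => 1 - y ^ 2) (-(2 * x)) x := by
      simpa using (hasDerivAt_pow 2 x).const_sub (1 : ℝ)
    exact (hnum.div hd hden).sub (l1.sub l2)
  have hmono : MonotoneOn ψ (Ico (0:ℝ) 1) := by
    apply monotoneOn_of_deriv_nonneg (convex_Ico 0 1)
    · apply ContinuousOn.sub
      · apply ContinuousOn.div (continuous_const.mul continuous_id).continuousOn
          (continuous_const.sub (continuous_pow 2)).continuousOn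
        intro x hx
        simp only [mem_Ico] at hx
        show (1:ℝ) - x ^ 2 ≠ 0
        nlinarith [hx.1, hx.2]
      · apply ContinuousOn.sub
        · apply ContinuousOn.log (continuous_const.add continuous_id).continuousOn
          intro x hx; simp only [mem_Ico] at hx; intro h
          change (1:ℝ) + x = 0 at h; linarith [hx.1]
        · apply ContinuousOn.log (continuous_const.sub continuous_id).continuousOn
          intro x hx; simp only [mem_Ico] at hx; intro h
          change (1:ℝ) - x = 0 at h; linarith [hx.2]
    · rw [interior_Ico]
      intro x hx
      exact ((key x hx).differentiableAt).differentiableWithinAt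
    · rw [interior_Ico]
      intro x hx
      rw [(key x hx).deriv]
      have hx1 : (0:ℝ) < 1 + x := by have := hx.1; linarith
      have hx2 : (0:ℝ) < 1 - x := by have := hx.2; linarith
      have hd2 : (0:ℝ) < (1 - x ^ 2) := by nlinarith [hx.1, hx.2]
      have hrw : (2 * (1 - x ^ 2) - 2 * x * (-(2 * x))) / (1 - x ^ 2) ^ 2
          - ((1 + x)⁻¹ * 1 - (1 - x)⁻¹ * (-1)) = 4 * x ^ 2 / (1 - x ^ 2) ^ 2 := by
        have h12 : (1 + x) * (1 - x) = 1 - x ^ 2 := by ring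
        field_simp
        ring
      rw [hrw]
      positivity
  have h0mem : (0:ℝ) ∈ Ico (0:ℝ) 1 := by constructor <;> norm_num
  have hsmem : s ∈ Ico (0:ℝ) 1 := ⟨h0, h1⟩
  have := hmono h0mem hsmem h0
  have hψ0 : ψ 0 = 0 := by simp [hψ]
  rw [hψ0] at this
  simp only [hψ] at this
  linarith

/-- `s ↦ (log(1+s) - log(1-s))/s` is monotone on `(0,1)`. -/
lemma A_mono : MonotoneOn (fun s => (Real.log (1 + s) - Real.log (1 - s)) / s)
    (Ioo (0:ℝ) 1) := by
  set A : ℝ → ℝ := fun s => (Real.log (1 + s) - Real.log (1 - s)) / s with hA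
  have key : ∀ x ∈ Ioo (0:ℝ) 1, HasDerivAt A
      ((((1 + x)⁻¹ * 1 - (1 - x)⁻¹ * (-1)) * x - (Real.log (1 + x) - Real.log (1 - x)) * 1)
        / x ^ 2) x := by
    intro x hx
    have hx1 : (0:ℝ) < 1 + x := by have := hx.1; linarith
    have hx2 : (0:ℝ) < 1 - x := by have := hx.2; linarith
    have d1 : HasDerivAt (fun y : ℝ => 1 + y) 1 x := by
      simpa using (hasDerivAt_id x).const_add (1 : ℝ)
    have d2 : HasDerivAt (fun y : ℝ => 1 - y) (-1) x := by
      simpa using (hasDerivAt_id x).const_sub (1 : ℝ)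
    have l1 : HasDerivAt (fun y : ℝ => Real.log (1 + y)) ((1 + x)⁻¹ * 1) x :=
      (Real.hasDerivAt_log hx1.ne').comp x d1
    have l2 : HasDerivAt (fun y : ℝ => Real.log (1 - y)) ((1 - x)⁻¹ * (-1)) x :=
      (Real.hasDerivAt_log hx2.ne').comp x d2
    exact (l1.sub l2).div (hasDerivAt_id x) hx.1.ne'
  apply monotoneOn_of_deriv_nonneg (convex_Ioo 0 1)
  · intro x hx
    exact ((key x hx).differentiableAt).continuousAt.continuousWithinAt
  · rw [interior_Ioo]
    intro x hx
    exact ((key x hx).differentiableAt).differentiableWithinAt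
  · rw [interior_Ioo]
    intro x hx
    rw [(key x hx).deriv]
    apply div_nonneg _ (sq_nonneg x)
    have hx1 : (0:ℝ) < 1 + x := by have := hx.1; linarith
    have hx2 : (0:ℝ) < 1 - x := by have := hx.2; linarith
    have hd2 : (0:ℝ) < 1 - x ^ 2 := by nlinarith [hx.1, hx.2]
    have hlog := log_ineq hx.1.le hx.2
    have hrw : ((1 + x)⁻¹ * 1 - (1 - x)⁻¹ * (-1)) * x = 2 * x / (1 - x ^ 2) := by
      field_simp
      ring
    rw [hrw]
    have : (Real.log (1 + x) - Real.log (1 - x)) * 1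
        = Real.log (1 + x) - Real.log (1 - x) := by ring
    rw [this]
    linarith
/-- The key convexity: `t ↦ Ibin (κ√t)` is convex on `[0,1]` for `0 < κ ≤ 1`. -/
lemma convexF {κ : ℝ} (hκ0 : 0 < κ) (hκ1 : κ ≤ 1) :
    ConvexOn ℝ (Icc (0:ℝ) 1) (fun t => Ibin (κ * Real.sqrt t)) := by
  have hlog2 : (0:ℝ) < Real.log 2 := Real.log_pos one_lt_two
  have hF : ∀ t ∈ Ioo (0:ℝ) 1, HasDerivAt (fun u => Ibin (κ * Real.sqrt u))
      ((Real.log (1 + κ * Real.sqrt t) - Real.log (1 - κ * Real.sqrt t)) / (2 * Real.log 2)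
        * (κ * (1 / (2 * Real.sqrt t)))) t := by
    intro t ht
    apply hasDerivAt_F ht.1 hκ0.le
    have h1 : Real.sqrt t < 1 := by
      rw [show (1:ℝ) = Real.sqrt 1 by simp]
      exact Real.sqrt_lt_sqrt ht.1.le ht.2
    calc κ * Real.sqrt t ≤ 1 * Real.sqrt t :=
          mul_le_mul_of_nonneg_right hκ1 (Real.sqrt_nonneg t)
      _ = Real.sqrt t := one_mul _
      _ < 1 := h1
  have hmem : ∀ t ∈ Ioo (0:ℝ) 1, κ * Real.sqrt t ∈ Ioo (0:ℝ) 1 := by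
    intro t ht
    constructor
    · exact mul_pos hκ0 (Real.sqrt_pos.2 ht.1)
    · have h1 : Real.sqrt t < 1 := by
        rw [show (1:ℝ) = Real.sqrt 1 by simp]
        exact Real.sqrt_lt_sqrt ht.1.le ht.2
      calc κ * Real.sqrt t ≤ 1 * Real.sqrt t :=
            mul_le_mul_of_nonneg_right hκ1 (Real.sqrt_nonneg t)
        _ = Real.sqrt t := one_mul _
        _ < 1 := h1
  have hderiv_eq : ∀ t ∈ Ioo (0:ℝ) 1,
      deriv (fun u => Ibin (κ * Real.sqrt u)) t
        = κ ^ 2 / (4 * Real.log 2)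
          * ((Real.log (1 + κ * Real.sqrt t) - Real.log (1 - κ * Real.sqrt t))
              / (κ * Real.sqrt t)) := by
    intro t ht
    rw [(hF t ht).deriv]
    have hst : (0:ℝ) < Real.sqrt t := Real.sqrt_pos.2 ht.1
    field_simp
    ring
  apply MonotoneOn.convexOn_of_deriv (convex_Icc 0 1)
  · exact (continuous_Ibin.comp (continuous_const.mul Real.continuous_sqrt)).continuousOn
  · rw [interior_Icc]
    intro t ht
    exact ((hF t ht).differentiableAt).differentiableWithinAt
  · rw [interior_Icc]
    intro t₁ ht₁ t₂ ht₂ h12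
    rw [hderiv_eq t₁ ht₁, hderiv_eq t₂ ht₂]
    apply mul_le_mul_of_nonneg_left _ (by positivity)
    apply A_mono (hmem t₁ ht₁) (hmem t₂ ht₂)
    exact mul_le_mul_of_nonneg_left (Real.sqrt_le_sqrt h12) hκ0.le

/-- Three-point Jensen inequality. -/
lemma jensen3 {F : ℝ → ℝ} (hF : ConvexOn ℝ (Icc (0:ℝ) 1) F)
    {w₀ w₁ w₂ t₀ t₁ t₂ : ℝ} (h₀ : 0 ≤ w₀) (h₁ : 0 ≤ w₁) (h₂ : 0 ≤ w₂)
    (hsum : w₀ + w₁ + w₂ = 1)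
    (ht₀ : t₀ ∈ Icc (0:ℝ) 1) (ht₁ : t₁ ∈ Icc (0:ℝ) 1) (ht₂ : t₂ ∈ Icc (0:ℝ) 1) :
    F (w₀ * t₀ + w₁ * t₁ + w₂ * t₂) ≤ w₀ * F t₀ + w₁ * F t₁ + w₂ * F t₂ := by
  have := hF.map_sum_le (t := Finset.univ) (w := ![w₀, w₁, w₂]) (p := ![t₀, t₁, t₂])
    (fun i _ => by fin_cases i <;> simpa)
    (by simpa [Fin.sum_univ_three] using hsum)
    (fun i _ => by fin_cases i <;> simpa)
  simpa [Fin.sum_univ_three, smul_eq_mul] using this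

end Stmt15Aux

open Stmt15Aux Set in
set_option maxHeartbeats 2000000 in
/-- For `0 < κ ≤ 1` and any unit direction `ĉ`, the average gain is minimal for the
isotropic direction `(1,1,1)/√3` and maximal for the direction `(0,0,1)`. -/
theorem stmt15 (μ : Measure (Fin 3 → ℝ)) (hμ : IsUniformSphereMeasure μ)
    (κ : ℝ) (hκ0 : 0 < κ) (hκ1 : κ ≤ 1)
    (c : Fin 3 → ℝ) (hc : c 0 ^ 2 + c 1 ^ 2 + c 2 ^ 2 = 1) :
    avgG μ κ ![1 / Real.sqrt 3, 1 / Real.sqrt 3, 1 / Real.sqrt 3] ≤ avgG μ κ c ∧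
    avgG μ κ c ≤ avgG μ κ ![0, 0, 1] := by
  obtain ⟨hprob, hsphere, hinv⟩ := hμ
  haveI := hprob
  -- a.e. the point is on the sphere
  have haeS : ∀ᵐ n ∂μ, n 0 ^ 2 + n 1 ^ 2 + n 2 ^ 2 = 1 := by
    rw [MeasureTheory.ae_iff]; exact hsphere
  -- the cyclic shift
  set T : (Fin 3 → ℝ) → (Fin 3 → ℝ) := fun n => ![n 1, n 2, n 0] with hT
  have hTc : Continuous T := by
    apply continuous_pi
    intro i
    fin_cases i <;> simp [hT] <;> exact continuous_apply _
  have hTO : Matrix.mulVec !![(0:ℝ),1,0;0,0,1;1,0,0] = T := by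
    funext v
    funext i
    fin_cases i <;>
      simp [hT, Matrix.mulVec, dotProduct, Fin.sum_univ_three]
  have hOorth : !![(0:ℝ),1,0;0,0,1;1,0,0] * !![(0:ℝ),1,0;0,0,1;1,0,0]ᵀ = 1 := by
    have htr : (!![(0:ℝ),1,0;0,0,1;1,0,0])ᵀ = !![(0:ℝ),0,1;1,0,0;0,1,0] := by
      ext i j
      fin_cases i <;> fin_cases j <;> rfl
    rw [htr]
    ext i j
    fin_cases i <;> fin_cases j <;>
      simp [Matrix.mul_apply, Fin.sum_univ_three, Matrix.one_apply,
        Matrix.vecHead, Matrix.vecTail]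
  have hmapT : μ.map T = μ := by
    rw [← hTO]; exact hinv _ hOorth
  have key : ∀ g : (Fin 3 → ℝ) → ℝ, Continuous g →
      ∫ n, g n ∂μ = ∫ n, g (T n) ∂μ := by
    intro g hg
    conv_lhs => rw [← hmapT]
    exact integral_map hTc.aemeasurable hg.aestronglyMeasurable
  -- Ibin is bounded on [0,1]
  obtain ⟨C, hC⟩ : ∃ C, ∀ x ∈ Icc (0:ℝ) 1, ‖Ibin x‖ ≤ C :=
    (isCompact_Icc (a := (0:ℝ)) (b := 1)).exists_bound_of_continuousOn
      continuous_Ibin.continuousOn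
  -- generic integrability
  have hint : ∀ q : (Fin 3 → ℝ) → ℝ, Continuous q → (∀ n, 0 ≤ q n) →
      (∀ n, n 0 ^ 2 + n 1 ^ 2 + n 2 ^ 2 = 1 → q n ≤ 1) →
      Integrable (fun n => Ibin (κ * Real.sqrt (q n))) μ := by
    intro q hq hq0 hq1
    apply Integrable.mono' (integrable_const C)
    · exact (continuous_Ibin.comp
        (continuous_const.mul (Real.continuous_sqrt.comp hq))).aestronglyMeasurable
    · filter_upwards [haeS] with n hn
      apply hC
      constructor
      · exact mul_nonneg hκ0.le (Real.sqrt_nonneg _)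
      · have h1 : Real.sqrt (q n) ≤ 1 := Real.sqrt_le_one.2 (hq1 n hn)
        calc κ * Real.sqrt (q n) ≤ 1 * Real.sqrt (q n) :=
              mul_le_mul_of_nonneg_right hκ1 (Real.sqrt_nonneg _)
          _ = Real.sqrt (q n) := one_mul _
          _ ≤ 1 := h1
  have hc0 : c 0 ^ 2 ≤ 1 := by nlinarith [sq_nonneg (c 1), sq_nonneg (c 2)]
  have hc1 : c 1 ^ 2 ≤ 1 := by nlinarith [sq_nonneg (c 0), sq_nonneg (c 2)]
  have hc2 : c 2 ^ 2 ≤ 1 := by nlinarith [sq_nonneg (c 0), sq_nonneg (c 1)]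
  have hconv := convexF hκ0 hκ1
  -- the three cyclically permuted quadratic forms
  set qa : (Fin 3 → ℝ) → ℝ := fun n => c 0 ^ 2 * n 0 ^ 2 + c 1 ^ 2 * n 1 ^ 2 + c 2 ^ 2 * n 2 ^ 2
    with hqa
  set qb : (Fin 3 → ℝ) → ℝ := fun n => c 1 ^ 2 * n 0 ^ 2 + c 2 ^ 2 * n 1 ^ 2 + c 0 ^ 2 * n 2 ^ 2
    with hqb
  set qc : (Fin 3 → ℝ) → ℝ := fun n => c 2 ^ 2 * n 0 ^ 2 + c 0 ^ 2 * n 1 ^ 2 + c 1 ^ 2 * n 2 ^ 2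
    with hqc
  have hcontq : ∀ a b d : ℝ, Continuous fun n : Fin 3 → ℝ =>
      a * n 0 ^ 2 + b * n 1 ^ 2 + d * n 2 ^ 2 := by
    intro a b d
    exact ((continuous_const.mul ((continuous_apply 0).pow 2)).add
      (continuous_const.mul ((continuous_apply 1).pow 2))).add
      (continuous_const.mul ((continuous_apply 2).pow 2))
  have hqa_int : Integrable (fun n => Ibin (κ * Real.sqrt (qa n))) μ := by
    apply hint qa (hcontq _ _ _)
    · intro n; positivity
    · intro n hn
      simp only [hqa]
      have h0' := mul_le_of_le_one_left (sq_nonneg (n 0)) hc0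
      have h1' := mul_le_of_le_one_left (sq_nonneg (n 1)) hc1
      have h2' := mul_le_of_le_one_left (sq_nonneg (n 2)) hc2
      linarith
  have hqb_int : Integrable (fun n => Ibin (κ * Real.sqrt (qb n))) μ := by
    apply hint qb (hcontq _ _ _)
    · intro n; positivity
    · intro n hn
      simp only [hqb]
      have h0' := mul_le_of_le_one_left (sq_nonneg (n 0)) hc1
      have h1' := mul_le_of_le_one_left (sq_nonneg (n 1)) hc2
      have h2' := mul_le_of_le_one_left (sq_nonneg (n 2)) hc0
      linarith
  have hqc_int : Integrable (fun n => Ibin (κ * Real.sqrt (qc n))) μ := by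
    apply hint qc (hcontq _ _ _)
    · intro n; positivity
    · intro n hn
      simp only [hqc]
      have h0' := mul_le_of_le_one_left (sq_nonneg (n 0)) hc2
      have h1' := mul_le_of_le_one_left (sq_nonneg (n 1)) hc0
      have h2' := mul_le_of_le_one_left (sq_nonneg (n 2)) hc1
      linarith
  -- integrals of cyclic shifts agree
  have hIb : ∫ n, Ibin (κ * Real.sqrt (qc n)) ∂μ = ∫ n, Ibin (κ * Real.sqrt (qa n)) ∂μ := by
    have hconta : Continuous fun n : Fin 3 → ℝ => Ibin (κ * Real.sqrt (qa n)) := by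
      simp only [hqa]
      exact continuous_Ibin.comp (continuous_const.mul
        (Real.continuous_sqrt.comp (hcontq _ _ _)))
    rw [key _ hconta]
    congr 1
    funext n
    have e0 : T n 0 = n 1 := by simp [hT]
    have e1 : T n 1 = n 2 := by simp [hT]
    have e2 : T n 2 = n 0 := by simp [hT]
    simp only [hqa, hqc, e0, e1, e2]
    ring_nf
  have hIc : ∫ n, Ibin (κ * Real.sqrt (qb n)) ∂μ = ∫ n, Ibin (κ * Real.sqrt (qc n)) ∂μ := by
    have hcontc : Continuous fun n : Fin 3 → ℝ => Ibin (κ * Real.sqrt (qc n)) := by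
      simp only [hqc]
      exact continuous_Ibin.comp (continuous_const.mul
        (Real.continuous_sqrt.comp (hcontq _ _ _)))
    rw [key _ hcontc]
    congr 1
    funext n
    have e0 : T n 0 = n 1 := by simp [hT]
    have e1 : T n 1 = n 2 := by simp [hT]
    have e2 : T n 2 = n 0 := by simp [hT]
    simp only [hqb, hqc, e0, e1, e2]
    ring_nf
  -- the single-coordinate integrands
  set J : Fin 3 → (Fin 3 → ℝ) → ℝ := fun i n => Ibin (κ * Real.sqrt (n i ^ 2)) with hJ
  have hcontJ : ∀ i, Continuous (J i) := by
    intro i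
    exact continuous_Ibin.comp (continuous_const.mul
      (Real.continuous_sqrt.comp ((continuous_apply i).pow 2)))
  have hintJ : ∀ i, Integrable (J i) μ := by
    intro i
    apply hint _ ((continuous_apply i).pow 2)
    · intro n; exact sq_nonneg (n i)
    · intro n hn
      fin_cases i
      · show n 0 ^ 2 ≤ 1
        nlinarith [sq_nonneg (n 1), sq_nonneg (n 2)]
      · show n 1 ^ 2 ≤ 1
        nlinarith [sq_nonneg (n 0), sq_nonneg (n 2)]
      · show n 2 ^ 2 ≤ 1
        nlinarith [sq_nonneg (n 0), sq_nonneg (n 1)]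
  have hJ01 : ∫ n, J 0 n ∂μ = ∫ n, J 1 n ∂μ := by
    rw [key _ (hcontJ 0)]
    congr 1
  have hJ12 : ∫ n, J 1 n ∂μ = ∫ n, J 2 n ∂μ := by
    rw [key _ (hcontJ 1)]
    congr 1
  constructor
  · -- MIN: isotropic direction is the minimizer
    have h3 : ((1:ℝ) / Real.sqrt 3) ^ 2 = 1 / 3 := by
      rw [div_pow, one_pow, Real.sq_sqrt (by norm_num : (0:ℝ) ≤ 3)]
    have hiso : avgG μ κ ![1 / Real.sqrt 3, 1 / Real.sqrt 3, 1 / Real.sqrt 3]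
        = Ibin (κ * Real.sqrt (1 / 3)) := by
      unfold avgG
      have hfun : (fun n : Fin 3 → ℝ => Ibin (κ * Real.sqrt (
            (![1 / Real.sqrt 3, 1 / Real.sqrt 3, 1 / Real.sqrt 3] : Fin 3 → ℝ) 0 ^ 2 * n 0 ^ 2
            + (![1 / Real.sqrt 3, 1 / Real.sqrt 3, 1 / Real.sqrt 3] : Fin 3 → ℝ) 1 ^ 2 * n 1 ^ 2
            + (![1 / Real.sqrt 3, 1 / Real.sqrt 3, 1 / Real.sqrt 3] : Fin 3 → ℝ) 2 ^ 2 * n 2 ^ 2)))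
          =ᵐ[μ] fun _ => Ibin (κ * Real.sqrt (1 / 3)) := by
        filter_upwards [haeS] with n hn
        have harg : (![1 / Real.sqrt 3, 1 / Real.sqrt 3, 1 / Real.sqrt 3] : Fin 3 → ℝ) 0 ^ 2 * n 0 ^ 2
            + (![1 / Real.sqrt 3, 1 / Real.sqrt 3, 1 / Real.sqrt 3] : Fin 3 → ℝ) 1 ^ 2 * n 1 ^ 2
            + (![1 / Real.sqrt 3, 1 / Real.sqrt 3, 1 / Real.sqrt 3] : Fin 3 → ℝ) 2 ^ 2 * n 2 ^ 2
            = 1 / 3 := by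
          have e0 : (![1 / Real.sqrt 3, 1 / Real.sqrt 3, 1 / Real.sqrt 3] : Fin 3 → ℝ) 0 = 1 / Real.sqrt 3 := rfl
          have e1 : (![1 / Real.sqrt 3, 1 / Real.sqrt 3, 1 / Real.sqrt 3] : Fin 3 → ℝ) 1 = 1 / Real.sqrt 3 := rfl
          have e2 : (![1 / Real.sqrt 3, 1 / Real.sqrt 3, 1 / Real.sqrt 3] : Fin 3 → ℝ) 2 = 1 / Real.sqrt 3 := rfl
          rw [e0, e1, e2]
          simp only [h3]
          linarith
        rw [harg]
      rw [integral_congr_ae hfun]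
      simp
    rw [hiso]
    have hptwise : ∀ᵐ n ∂μ, Ibin (κ * Real.sqrt (1 / 3))
        ≤ 1 / 3 * Ibin (κ * Real.sqrt (qa n)) + 1 / 3 * Ibin (κ * Real.sqrt (qb n))
          + 1 / 3 * Ibin (κ * Real.sqrt (qc n)) := by
      filter_upwards [haeS] with n hn
      have hta : qa n ∈ Icc (0:ℝ) 1 := by
        constructor
        · simp only [hqa]; positivity
        · simp only [hqa]
          have h0' := mul_le_of_le_one_left (sq_nonneg (n 0)) hc0
          have h1' := mul_le_of_le_one_left (sq_nonneg (n 1)) hc1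
          have h2' := mul_le_of_le_one_left (sq_nonneg (n 2)) hc2
          linarith
      have htb : qb n ∈ Icc (0:ℝ) 1 := by
        constructor
        · simp only [hqb]; positivity
        · simp only [hqb]
          have h0' := mul_le_of_le_one_left (sq_nonneg (n 0)) hc1
          have h1' := mul_le_of_le_one_left (sq_nonneg (n 1)) hc2
          have h2' := mul_le_of_le_one_left (sq_nonneg (n 2)) hc0
          linarith
      have htc : qc n ∈ Icc (0:ℝ) 1 := by
        constructor
        · simp only [hqc]; positivity
        · simp only [hqc]
          have h0' := mul_le_of_le_one_left (sq_nonneg (n 0)) hc2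
          have h1' := mul_le_of_le_one_left (sq_nonneg (n 1)) hc0
          have h2' := mul_le_of_le_one_left (sq_nonneg (n 2)) hc1
          linarith
      have hj := jensen3 hconv (by norm_num) (by norm_num) (by norm_num)
        (by norm_num : (1:ℝ)/3 + 1/3 + 1/3 = 1) hta htb htc
      have hsum : 1 / 3 * qa n + 1 / 3 * qb n + 1 / 3 * qc n = (1:ℝ) / 3 := by
        have : qa n + qb n + qc n
            = (c 0 ^ 2 + c 1 ^ 2 + c 2 ^ 2) * (n 0 ^ 2 + n 1 ^ 2 + n 2 ^ 2) := by
          simp only [hqa, hqb, hqc]; ring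
        rw [hc, hn, one_mul] at this
        linear_combination this / 3
      rw [hsum] at hj
      exact hj
    have hrhs_int : Integrable (fun n => 1 / 3 * Ibin (κ * Real.sqrt (qa n))
        + 1 / 3 * Ibin (κ * Real.sqrt (qb n)) + 1 / 3 * Ibin (κ * Real.sqrt (qc n))) μ :=
      ((hqa_int.const_mul _).add (hqb_int.const_mul _)).add (hqc_int.const_mul _)
    have := integral_mono_ae (integrable_const _) hrhs_int hptwise
    rw [integral_const] at this
    simp only [probReal_univ, one_smul] at this
    calc Ibin (κ * Real.sqrt (1 / 3))
        ≤ ∫ n, (1 / 3 * Ibin (κ * Real.sqrt (qa n)) + 1 / 3 * Ibin (κ * Real.sqrt (qb n))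
            + 1 / 3 * Ibin (κ * Real.sqrt (qc n))) ∂μ := this
      _ = 1 / 3 * ∫ n, Ibin (κ * Real.sqrt (qa n)) ∂μ
          + 1 / 3 * ∫ n, Ibin (κ * Real.sqrt (qb n)) ∂μ
          + 1 / 3 * ∫ n, Ibin (κ * Real.sqrt (qc n)) ∂μ := by
          have s1 : ∫ n, (1 / 3 * Ibin (κ * Real.sqrt (qa n)) + 1 / 3 * Ibin (κ * Real.sqrt (qb n))
              + 1 / 3 * Ibin (κ * Real.sqrt (qc n))) ∂μ
              = (∫ n, (1 / 3 * Ibin (κ * Real.sqrt (qa n))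
                + 1 / 3 * Ibin (κ * Real.sqrt (qb n))) ∂μ)
                + ∫ n, 1 / 3 * Ibin (κ * Real.sqrt (qc n)) ∂μ :=
            integral_add ((hqa_int.const_mul _).add (hqb_int.const_mul _)) (hqc_int.const_mul _)
          have s2 : ∫ n, (1 / 3 * Ibin (κ * Real.sqrt (qa n))
              + 1 / 3 * Ibin (κ * Real.sqrt (qb n))) ∂μ
              = (∫ n, 1 / 3 * Ibin (κ * Real.sqrt (qa n)) ∂μ)
                + ∫ n, 1 / 3 * Ibin (κ * Real.sqrt (qb n)) ∂μ :=
            integral_add (hqa_int.const_mul _) (hqb_int.const_mul _)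
          rw [s1, s2, integral_const_mul, integral_const_mul, integral_const_mul]
      _ = avgG μ κ c := by
          rw [hIc, hIb]
          unfold avgG
          simp only [hqa]
          ring
  · -- MAX: (0,0,1) is the maximizer
    have hptwise : ∀ᵐ n ∂μ, Ibin (κ * Real.sqrt (qa n))
        ≤ c 0 ^ 2 * J 0 n + c 1 ^ 2 * J 1 n + c 2 ^ 2 * J 2 n := by
      filter_upwards [haeS] with n hn
      simp only [hqa, hJ]
      have ht0 : n 0 ^ 2 ∈ Icc (0:ℝ) 1 := by
        constructor
        · positivity
        · nlinarith [sq_nonneg (n 1), sq_nonneg (n 2)]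
      have ht1 : n 1 ^ 2 ∈ Icc (0:ℝ) 1 := by
        constructor
        · positivity
        · nlinarith [sq_nonneg (n 0), sq_nonneg (n 2)]
      have ht2 : n 2 ^ 2 ∈ Icc (0:ℝ) 1 := by
        constructor
        · positivity
        · nlinarith [sq_nonneg (n 0), sq_nonneg (n 1)]
      exact jensen3 hconv (sq_nonneg (c 0)) (sq_nonneg (c 1)) (sq_nonneg (c 2)) hc ht0 ht1 ht2
    have hrhs_int : Integrable
        (fun n => c 0 ^ 2 * J 0 n + c 1 ^ 2 * J 1 n + c 2 ^ 2 * J 2 n) μ :=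
      (((hintJ 0).const_mul _).add ((hintJ 1).const_mul _)).add ((hintJ 2).const_mul _)
    have hmono := integral_mono_ae hqa_int hrhs_int hptwise
    have hsplit : ∫ n, (c 0 ^ 2 * J 0 n + c 1 ^ 2 * J 1 n + c 2 ^ 2 * J 2 n) ∂μ
        = c 0 ^ 2 * ∫ n, J 0 n ∂μ + c 1 ^ 2 * ∫ n, J 1 n ∂μ + c 2 ^ 2 * ∫ n, J 2 n ∂μ := by
      have s1 : ∫ n, (c 0 ^ 2 * J 0 n + c 1 ^ 2 * J 1 n + c 2 ^ 2 * J 2 n) ∂μ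
          = (∫ n, (c 0 ^ 2 * J 0 n + c 1 ^ 2 * J 1 n) ∂μ) + ∫ n, c 2 ^ 2 * J 2 n ∂μ :=
        integral_add (((hintJ 0).const_mul _).add ((hintJ 1).const_mul _)) ((hintJ 2).const_mul _)
      have s2 : ∫ n, (c 0 ^ 2 * J 0 n + c 1 ^ 2 * J 1 n) ∂μ
          = (∫ n, c 0 ^ 2 * J 0 n ∂μ) + ∫ n, c 1 ^ 2 * J 1 n ∂μ :=
        integral_add ((hintJ 0).const_mul _) ((hintJ 1).const_mul _)
      rw [s1, s2, integral_const_mul, integral_const_mul, integral_const_mul]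
    have hmax : avgG μ κ ![0, 0, 1] = ∫ n, J 2 n ∂μ := by
      unfold avgG
      congr 1
      funext n
      simp [hJ]
    calc avgG μ κ c = ∫ n, Ibin (κ * Real.sqrt (qa n)) ∂μ := by
          unfold avgG; simp only [hqa]
      _ ≤ ∫ n, (c 0 ^ 2 * J 0 n + c 1 ^ 2 * J 1 n + c 2 ^ 2 * J 2 n) ∂μ := hmono
      _ = c 0 ^ 2 * ∫ n, J 0 n ∂μ + c 1 ^ 2 * ∫ n, J 1 n ∂μ + c 2 ^ 2 * ∫ n, J 2 n ∂μ := hsplit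
      _ = (c 0 ^ 2 + c 1 ^ 2 + c 2 ^ 2) * ∫ n, J 2 n ∂μ := by
          rw [hJ01, hJ12]; ring
      _ = ∫ n, J 2 n ∂μ := by rw [hc, one_mul]
      _ = avgG μ κ ![0, 0, 1] := hmax.symm
end
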